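/- For constants C₁ ≠ 0, C₂, C₃ ∈ ℝ and ν > 0, the function u(x,t) = (C₂ + 2ν C₁² tanh(C₂ t - C₁ x + C₃))/C₁ solves the viscous Burgers' equation ∂_t u = ν ∂_{xx} u - u ∂_x u on all of ℝ × ℝ. -/

import Mathlib

lemma my_hasDerivAt_tanh (x : ℝ) :
    HasDerivAt Real.tanh (1 - Real.tanh x ^ 2) x := by
  have h := (Real.hasDerivAt_sinh x).div (Real.hasDerivAt_cosh x) (Real.cosh_pos x).ne'
  have hc := (Real.cosh_pos x).ne'
  have : (Real.cosh x * Real.cosh x - Real.sinh x * Real.sinh x) / Real.cosh x ^ 2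
      = 1 - Real.tanh x ^ 2 := by
    rw [Real.tanh_eq_sinh_div_cosh]
    field_simp
  rw [this] at h
  exact h.congr_of_eventuallyEq (by filter_upwards with y using Real.tanh_eq_sinh_div_cosh y)

/-- For constants `C₁ ≠ 0`, `C₂`, `C₃` and viscosity `ν > 0`, the function
`u(x,t) = (C₂ + 2ν C₁² tanh(C₂ t - C₁ x + C₃))/C₁` solves the viscous
Burgers' equation `∂_t u = ν ∂_{xx} u - u ∂_x u` on all of `ℝ × ℝ`. -/
theorem burgers_tanh_solution (ν C₁ C₂ C₃ : ℝ) (hC₁ : C₁ ≠ 0) (hν : 0 < ν)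
    (u : ℝ → ℝ → ℝ)
    (hu : ∀ x t, u x t =
      (C₂ + 2 * ν * C₁ ^ 2 * Real.tanh (C₂ * t - C₁ * x + C₃)) / C₁) :
    ∀ x t, deriv (fun s => u x s) t =
      ν * deriv (deriv fun y => u y t) x - u x t * deriv (fun y => u y t) x := by
  intro x t
  set a := 2 * ν * C₁ ^ 2 with ha
  set θ : ℝ → ℝ → ℝ := fun y s => C₂ * s - C₁ * y + C₃ with hθ
  -- tanh composed, as function of x
  have htx : ∀ y s : ℝ, HasDerivAt (fun y' => Real.tanh (θ y' s))
      ((1 - Real.tanh (θ y s) ^ 2) * (-C₁)) y := by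
    intro y s
    have h1 : HasDerivAt (fun y' => θ y' s) (-C₁) y := by
      simpa [hθ] using (((hasDerivAt_id y).const_mul C₁).const_sub (C₂ * s)).add_const C₃
    exact (my_hasDerivAt_tanh (θ y s)).comp y h1
  -- time derivative
  have hT : HasDerivAt (fun s => u x s)
      (a * ((1 - Real.tanh (θ x t) ^ 2) * C₂) / C₁) t := by
    have h1 : HasDerivAt (fun s' => θ x s') C₂ t := by
      simpa [hθ] using (((hasDerivAt_id t).const_mul C₂).sub_const (C₁ * x)).add_const C₃
    have h2 := (my_hasDerivAt_tanh (θ x t)).comp t h1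
    have h3 := ((h2.const_mul a).const_add C₂).div_const C₁
    refine h3.congr_of_eventuallyEq ?_
    filter_upwards with s
    rw [hu x s]
    rfl
  -- first x derivative as a function
  have hX : ∀ y : ℝ, HasDerivAt (fun y' => u y' t)
      (a * ((1 - Real.tanh (θ y t) ^ 2) * (-C₁)) / C₁) y := by
    intro y
    have h3 := (((htx y t).const_mul a).const_add C₂).div_const C₁
    refine h3.congr_of_eventuallyEq ?_
    filter_upwards with y'
    rw [hu y' t]
  have hderiv1 : deriv (fun y' => u y' t) =
      fun y => a * ((1 - Real.tanh (θ y t) ^ 2) * (-C₁)) / C₁ := by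
    funext y; exact (hX y).deriv
  -- second x derivative
  have hXX : HasDerivAt (deriv (fun y' => u y' t))
      (a * ((-(2 * Real.tanh (θ x t) * ((1 - Real.tanh (θ x t) ^ 2) * (-C₁)))) * (-C₁)) / C₁) x := by
    rw [hderiv1]
    have h1 : HasDerivAt (fun y => Real.tanh (θ y t) ^ 2)
        (2 * Real.tanh (θ x t) * ((1 - Real.tanh (θ x t) ^ 2) * (-C₁))) x := by
      simpa [mul_comm] using ((htx x t).fun_pow 2)
    have h2 : HasDerivAt (fun y => 1 - Real.tanh (θ y t) ^ 2)
        (-(2 * Real.tanh (θ x t) * ((1 - Real.tanh (θ x t) ^ 2) * (-C₁)))) x := h1.const_sub 1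
    have h3 := ((h2.mul_const (-C₁)).const_mul a).div_const C₁
    exact h3
  rw [hT.deriv, hXX.deriv, (hX x).deriv, hu x t]
  have hT2 : Real.tanh (θ x t) = Real.tanh (C₂ * t - C₁ * x + C₃) := rfl
  rw [hT2]
  field_simp
  ring
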